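/- arXiv:1605.00722 — 2 statements merged into one kernel-verified Lean document; each statement's English description precedes it below -/
import Mathlib

section
/- Let A be an associative algebra and σ an algebra automorphism of A. If D₁ and D₂ are (σ,σ)-derivations of A (i.e. linear maps with D(ab) = D(a)σ(b) + σ(a)D(b)), then the bracket [D₁,D₂]_σ = σ∘D₁∘σ⁻¹∘D₂∘σ⁻¹ − σ∘D₂∘σ⁻¹∘D₁∘σ⁻¹ is again a (σ,σ)-derivation of A. -/
/-- `D` is a `(σ,σ)`-derivation of the associative algebra `A`. -/
def IsSigmaSigmaDerivation {K A : Type*} [Field K] [Ring A] [Algebra K A]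
    (σ : A ≃ₐ[K] A) (D : A →ₗ[K] A) : Prop :=
  ∀ a b : A, D (a * b) = D a * σ b + σ a * D b

/-- The bracket `[D₁,D₂]_σ = σ∘D₁∘σ⁻¹∘D₂∘σ⁻¹ − σ∘D₂∘σ⁻¹∘D₁∘σ⁻¹`. -/
def sigmaBracket {K A : Type*} [Field K] [Ring A] [Algebra K A]
    (σ : A ≃ₐ[K] A) (D₁ D₂ : A →ₗ[K] A) : A →ₗ[K] A :=
  σ.toLinearMap ∘ₗ D₁ ∘ₗ σ.symm.toLinearMap ∘ₗ D₂ ∘ₗ σ.symm.toLinearMap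
    - σ.toLinearMap ∘ₗ D₂ ∘ₗ σ.symm.toLinearMap ∘ₗ D₁ ∘ₗ σ.symm.toLinearMap

/-- The "untwisted" Leibniz rule: `a ↦ D (σ⁻¹ a)` is an ordinary derivation. -/
lemma twisted_leibniz {K A : Type*} [Field K] [Ring A] [Algebra K A]
    (σ : A ≃ₐ[K] A) (D : A →ₗ[K] A) (h : IsSigmaSigmaDerivation σ D) (a b : A) :
    D (σ.symm a * σ.symm b) = D (σ.symm a) * b + a * D (σ.symm b) := by
  rw [h, σ.apply_symm_apply, σ.apply_symm_apply]

/-- the bracket of two `(σ,σ)`-derivations is a `(σ,σ)`-derivation. -/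
theorem sigmaBracket_isSigmaSigmaDerivation {K A : Type*} [Field K] [Ring A] [Algebra K A]
    (σ : A ≃ₐ[K] A) (D₁ D₂ : A →ₗ[K] A)
    (h₁ : IsSigmaSigmaDerivation σ D₁) (h₂ : IsSigmaSigmaDerivation σ D₂) :
    IsSigmaSigmaDerivation σ (sigmaBracket σ D₁ D₂) := by
  intro a b
  simp only [sigmaBracket, LinearMap.sub_apply, LinearMap.comp_apply,
    AlgEquiv.toLinearMap_apply, map_mul]
  simp only [twisted_leibniz σ D₁ h₁, twisted_leibniz σ D₂ h₂, map_add, map_mul,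
    σ.apply_symm_apply]
  noncomm_ring
end

section
/- Let A be an associative algebra and σ an algebra automorphism. Define Ad_σ(D) = σ∘D∘σ⁻¹ on the space Der_{σ,σ}(A) of (σ,σ)-derivations, and the bracket [D₁,D₂]_σ = σ∘D₁∘σ⁻¹∘D₂∘σ⁻¹ − σ∘D₂∘σ⁻¹∘D₁∘σ⁻¹. Then (Der_{σ,σ}(A), [·,·]_σ, Ad_σ) is a Hom-Lie algebra: [·,·]_σ is skew-symmetric, Ad_σ is an algebra automorphism with respect to [·,·]_σ, and the Hom-Jacobi identity [[D₁,D₂]_σ, Ad_σ(D₃)]_σ + [[D₂,D₃]_σ, Ad_σ(D₁)]_σ + [[D₃,D₁]_σ, Ad_σ(D₂)]_σ = 0 holds. -/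
/-- `Ad_σ(D) = σ ∘ D ∘ σ⁻¹`. -/
def adSigma {K A : Type*} [Field K] [Ring A] [Algebra K A]
    (σ : A ≃ₐ[K] A) (D : A →ₗ[K] A) : A →ₗ[K] A :=
  σ.toLinearMap ∘ₗ D ∘ₗ σ.symm.toLinearMap

/-- `(Der_{σ,σ}(A), [·,·]_σ, Ad_σ)` is a Hom-Lie algebra: the bracket and
`Ad_σ` preserve the space of `(σ,σ)`-derivations, the bracket is skew-symmetric, `Ad_σ`
is an algebra automorphism for the bracket, and the Hom-Jacobi identity holds. -/
theorem derSigmaSigma_homLie {K A : Type*} [Field K] [Ring A] [Algebra K A]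
    (σ : A ≃ₐ[K] A) :
    (∀ D : A →ₗ[K] A, IsSigmaSigmaDerivation σ D → IsSigmaSigmaDerivation σ (adSigma σ D)) ∧
    (∀ D₁ D₂ : A →ₗ[K] A, IsSigmaSigmaDerivation σ D₁ → IsSigmaSigmaDerivation σ D₂ →
      IsSigmaSigmaDerivation σ (sigmaBracket σ D₁ D₂)) ∧
    (∀ D₁ D₂ : A →ₗ[K] A, IsSigmaSigmaDerivation σ D₁ → IsSigmaSigmaDerivation σ D₂ →
      sigmaBracket σ D₁ D₂ = - sigmaBracket σ D₂ D₁) ∧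
    (∀ D₁ D₂ : A →ₗ[K] A, IsSigmaSigmaDerivation σ D₁ → IsSigmaSigmaDerivation σ D₂ →
      adSigma σ (sigmaBracket σ D₁ D₂) = sigmaBracket σ (adSigma σ D₁) (adSigma σ D₂)) ∧
    (∀ D₁ D₂ D₃ : A →ₗ[K] A, IsSigmaSigmaDerivation σ D₁ → IsSigmaSigmaDerivation σ D₂ →
      IsSigmaSigmaDerivation σ D₃ →
      sigmaBracket σ (sigmaBracket σ D₁ D₂) (adSigma σ D₃)
        + sigmaBracket σ (sigmaBracket σ D₂ D₃) (adSigma σ D₁)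
        + sigmaBracket σ (sigmaBracket σ D₃ D₁) (adSigma σ D₂) = 0) := by
  refine ⟨?_, ?_, ?_, ?_, ?_⟩
  · intro D hD a b
    rw [IsSigmaSigmaDerivation] at hD
    simp only [adSigma, LinearMap.comp_apply, AlgEquiv.toLinearMap_apply, map_mul, hD,
      AlgEquiv.apply_symm_apply, map_add]
  · intro D₁ D₂ h₁ h₂ a b
    rw [IsSigmaSigmaDerivation] at h₁ h₂
    simp only [sigmaBracket, LinearMap.sub_apply, LinearMap.comp_apply,
      AlgEquiv.toLinearMap_apply, map_mul, h₁, h₂, AlgEquiv.apply_symm_apply, map_add,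
      map_sub]
    noncomm_ring
  · intro D₁ D₂ h₁ h₂
    ext a
    simp only [sigmaBracket, LinearMap.sub_apply, LinearMap.neg_apply]
    abel
  · intro D₁ D₂ h₁ h₂
    ext a
    simp only [sigmaBracket, adSigma, LinearMap.sub_apply, LinearMap.comp_apply,
      AlgEquiv.toLinearMap_apply, AlgEquiv.symm_apply_apply, map_sub]
  · intro D₁ D₂ D₃ h₁ h₂ h₃
    ext a
    simp only [sigmaBracket, adSigma, LinearMap.add_apply, LinearMap.sub_apply,
      LinearMap.comp_apply, AlgEquiv.toLinearMap_apply, AlgEquiv.symm_apply_apply,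
      map_sub, LinearMap.map_sub, LinearMap.zero_apply]
    abel
end
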